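/- Let X be a d×d positive definite Hermitian complex matrix with Tr X² = 1 and let Y be a d×d complex matrix with Tr(Y Yᴴ) = 1 and Tr(X Yᴴ) = 0, and set ρ(t) = X(t) X(t)ᴴ where X(t) = √(1−t²) X + t Y. Then there exist R > 0 and τ ∈ (0,1) such that for all t ∈ (−τ, τ): ρ(t) is positive definite, the map t ↦ S(ρ(t)) is three times differentiable at t, and the absolute value of its third derivative at t is strictly less than R. -/

import Mathlib

open Matrix
open scoped Kronecker ComplexOrder

attribute [local instance] Matrix.frobeniusNormedAddCommGroup Matrix.frobeniusNormedSpace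

/-- The von Neumann entropy `S(A) = −∑ᵢ λᵢ log λᵢ` of a Hermitian matrix `A`
(with the convention `0 · log 0 = 0`; junk value `0` for non-Hermitian input). -/
noncomputable def entropy {n : Type*} [Fintype n] [DecidableEq n] (A : Matrix n n ℂ) : ℝ :=
  if h : A.IsHermitian then -∑ i, h.eigenvalues i * Real.log (h.eigenvalues i) else 0

/-- The matrix logarithm of a Hermitian matrix: the Hermitian matrix with the same
eigenvectors and eigenvalues `log λᵢ` (junk value `0` for non-Hermitian input). -/
noncomputable def matLog {n : Type*} [Fintype n] [DecidableEq n] (A : Matrix n n ℂ) :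
    Matrix n n ℂ :=
  if h : A.IsHermitian then
    (h.eigenvectorUnitary : Matrix n n ℂ) *
      Matrix.diagonal (fun i => (Real.log (h.eigenvalues i) : ℂ)) *
      (h.eigenvectorUnitary : Matrix n n ℂ)ᴴ
  else 0

/-- Entrywise (Bochner) integral over `(0, ∞)` of a matrix-valued function. -/
noncomputable def matIntegral {n : Type*} [Fintype n] (f : ℝ → Matrix n n ℂ) :
    Matrix n n ℂ :=
  Matrix.of fun i j => ∫ u in Set.Ioi (0 : ℝ), f u i j

/-- The curve `X(t) = √(1−t²) X + t Y`. -/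
noncomputable def curveM {p q : Type*} (X Y : Matrix p q ℂ) (t : ℝ) : Matrix p q ℂ :=
  (Real.sqrt (1 - t ^ 2) : ℂ) • X + (t : ℂ) • Y

attribute [-instance] Matrix.frobeniusNormedAddCommGroup Matrix.frobeniusNormedSpace

open scoped Matrix.Norms.L2Operator NNReal ENNReal

namespace EntropyAux

/-! ### Scalar series for `-x log x` around `M` -/

noncomputable def entCoef (M : ℝ) : ℕ → ℝ
  | 0 => -(M * Real.log M)
  | 1 => -(Real.log M + 1)
  | (n + 2) => (-1 : ℝ) ^ (n + 1) / (((n : ℝ) + 2) * ((n : ℝ) + 1) * M ^ (n + 1))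

lemma abs_entCoef_le {M : ℝ} (hM : 0 < M) (n : ℕ) :
    |entCoef M (n + 2)| ≤ (1 / M) ^ (n + 1) := by
  have h1 : (0:ℝ) < ((n : ℝ) + 2) * ((n : ℝ) + 1) * M ^ (n + 1) := by positivity
  have h2 : (M:ℝ) ^ (n + 1) ≤ ((n : ℝ) + 2) * ((n : ℝ) + 1) * M ^ (n + 1) := by
    have hc : (1:ℝ) ≤ ((n : ℝ) + 2) * ((n : ℝ) + 1) := by nlinarith [(Nat.cast_nonneg n : (0:ℝ) ≤ n)]
    exact le_mul_of_one_le_left (pow_pos hM _).le hc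
  have : |entCoef M (n + 2)| = 1 / (((n : ℝ) + 2) * ((n : ℝ) + 1) * M ^ (n + 1)) := by
    show |(-1 : ℝ) ^ (n + 1) / _| = _
    rw [abs_div, abs_pow, abs_neg, abs_one, one_pow, abs_of_pos h1]
  rw [this, one_div, one_div, inv_pow]
  exact inv_anti₀ (pow_pos hM _) h2

lemma summable_entCoef {M r : ℝ} (hM : 0 < M) (hr0 : 0 ≤ r) (hr : r < M) :
    Summable (fun k : ℕ => |entCoef M k| * r ^ k) := by
  have hq0 : 0 ≤ r / M := div_nonneg hr0 hM.le
  have hq1 : r / M < 1 := (div_lt_one hM).mpr hr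
  have hgeom : Summable (fun n : ℕ => (r * r * (1 / M)) * (r / M) ^ n) :=
    (summable_geometric_of_lt_one hq0 hq1).mul_left _
  have hshift : Summable (fun n : ℕ => |entCoef M (n + 2)| * r ^ (n + 2)) := by
    refine hgeom.of_nonneg_of_le (fun n => by positivity) (fun n => ?_)
    have h1 := abs_entCoef_le hM n
    have h2 : |entCoef M (n + 2)| * r ^ (n + 2) ≤ (1 / M) ^ (n + 1) * r ^ (n + 2) := by
      have : (0:ℝ) ≤ r ^ (n + 2) := by positivity
      exact mul_le_mul_of_nonneg_right h1 this
    refine h2.trans (le_of_eq ?_)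
    rw [div_pow, one_pow, div_pow]
    have hMp : (M:ℝ) ^ (n + 1) ≠ 0 := (pow_pos hM _).ne'
    have hMp2 : (M:ℝ) ^ n ≠ 0 := (pow_pos hM _).ne'
    field_simp
    ring
  exact (summable_nat_add_iff 2).mp hshift

lemma hasSum_entCoef {M y : ℝ} (hM : 0 < M) (hy : |y| < M) :
    HasSum (fun k : ℕ => entCoef M k * y ^ k) (-((M + y) * Real.log (M + y))) := by
  have hMne : M ≠ 0 := hM.ne'
  set u : ℝ := y / M with hu_def
  have hMu : M * u = y := by rw [hu_def]; field_simp
  have hu : |u| < 1 := by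
    rw [hu_def, abs_div, abs_of_pos hM]
    exact (div_lt_one hM).mpr hy
  obtain ⟨hul, hur⟩ := abs_lt.mp hu
  have hu1 : 0 < 1 + u := by linarith
  have h1 : HasSum (fun n : ℕ => (-u) ^ (n + 1) / ((n : ℝ) + 1)) (-Real.log (1 + u)) := by
    have h := Real.hasSum_pow_div_log_of_abs_lt_one (x := -u) (by rwa [abs_neg])
    simpa [sub_neg_eq_add] using h
  have hp1 : HasSum (fun n : ℕ => (M * u) * ((-u) ^ (n + 1) / ((n : ℝ) + 1)))
      ((M * u) * (-Real.log (1 + u))) := h1.mul_left _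
  have hMh : HasSum (fun n : ℕ => M * ((-u) ^ (n + 1) / ((n : ℝ) + 1)))
      (M * (-Real.log (1 + u))) := h1.mul_left M
  have hp2 : HasSum (fun n : ℕ => M * ((-u) ^ (n + 1 + 1) / ((↑(n + 1) : ℝ) + 1)))
      (M * (-Real.log (1 + u)) + M * u) := by
    refine (hasSum_nat_add_iff (f := fun n : ℕ => M * ((-u) ^ (n + 1) / ((n : ℝ) + 1))) 1).mpr ?_
    convert hMh using 1
    · rfl
    rw [Finset.sum_range_one]
    norm_num
  have hfe : (fun n : ℕ => entCoef M (n + 2) * y ^ (n + 2)) = fun n : ℕ =>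
      (M * u) * ((-u) ^ (n + 1) / ((n : ℝ) + 1)) +
        M * ((-u) ^ (n + 1 + 1) / ((↑(n + 1) : ℝ) + 1)) := by
    funext n
    have hn1 : ((n : ℝ) + 1) ≠ 0 := by positivity
    have hn2 : ((n : ℝ) + 2) ≠ 0 := by positivity
    show (-1 : ℝ) ^ (n + 1) / (((n : ℝ) + 2) * ((n : ℝ) + 1) * M ^ (n + 1)) * y ^ (n + 2) = _
    rw [← hMu]
    push_cast
    field_simp
    ring
  have htail : HasSum (fun n : ℕ => entCoef M (n + 2) * y ^ (n + 2))
      ((M * u) * (-Real.log (1 + u)) + (M * (-Real.log (1 + u)) + M * u)) := by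
    rw [hfe]; exact hp1.add hp2
  have hfull := (hasSum_nat_add_iff (f := fun k : ℕ => entCoef M k * y ^ k) 2).mp htail
  convert hfull using 1
  · rfl
  have hlog : Real.log (M + y) = Real.log M + Real.log (1 + u) := by
    rw [show M + y = M * (1 + u) by rw [← hMu]; ring, Real.log_mul hMne hu1.ne']
  simp only [Finset.sum_range_succ, Finset.sum_range_zero, entCoef, hlog, pow_zero, pow_one,
    zero_add]
  rw [← hMu]
  ring

/-! ### Matrix lemmas (L2 operator norm) -/

variable {d : ℕ}

noncomputable local instance : CStarAlgebra (Matrix (Fin d) (Fin d) ℂ) := {}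

lemma matNontrivial (hd : 0 < d) : Nontrivial (Matrix (Fin d) (Fin d) ℂ) := by
  refine ⟨0, 1, fun h => ?_⟩
  have := congrFun (congrFun h ⟨0, hd⟩) ⟨0, hd⟩
  simp [Matrix.one_apply] at this

lemma norm_le_of_spectrum_le (hd : 0 < d) {B : Matrix (Fin d) (Fin d) ℂ} (hB : B.IsHermitian)
    {m : ℝ} (hm0 : 0 ≤ m) (hm : ∀ x ∈ spectrum ℝ B, |x| ≤ m) : ‖B‖ ≤ m := by
  haveI := matNontrivial hd
  have hsa : IsSelfAdjoint B := hB.isSelfAdjoint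
  rw [← hsa.toReal_spectralRadius_complex_eq_norm]
  have hle : spectralRadius ℂ B ≤ ENNReal.ofReal m := by
    rw [spectralRadius]
    refine iSup₂_le fun z hz => ?_
    have hz' : z = (z.re : ℂ) := hsa.mem_spectrum_eq_re hz
    have hre : z.re ∈ spectrum ℝ B := by
      refine spectrum.of_algebraMap_mem ℂ ?_
      simpa [Complex.coe_algebraMap] using (hz' ▸ hz)
    rw [← enorm_eq_nnnorm, ← ofReal_norm]
    refine ENNReal.ofReal_le_ofReal ?_
    rw [hz']
    simpa [Real.norm_eq_abs] using hm _ hre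
  calc (spectralRadius ℂ B).toReal ≤ (ENNReal.ofReal m).toReal :=
        ENNReal.toReal_mono (by simp) hle
    _ = m := ENNReal.toReal_ofReal hm0

lemma algebraMap_eq_smul_one' (M : ℝ) :
    algebraMap ℝ (Matrix (Fin d) (Fin d) ℂ) M = (M : ℂ) • (1 : Matrix (Fin d) (Fin d) ℂ) := by
  ext i j
  simp [Matrix.algebraMap_matrix_apply, Matrix.one_apply, Algebra.algebraMap_eq_smul_one]

lemma eigenvalues_close (hd : 0 < d) {A : Matrix (Fin d) (Fin d) ℂ} (hA : A.IsHermitian)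
    (M : ℝ) (i : Fin d) :
    |hA.eigenvalues i - M| ≤ ‖A - (M : ℂ) • 1‖ := by
  haveI := matNontrivial hd
  haveI : NormOneClass (Matrix (Fin d) (Fin d) ℂ) := ⟨CStarRing.norm_one⟩
  have h1 : hA.eigenvalues i ∈ spectrum ℝ A := hA.eigenvalues_mem_spectrum_real i
  have h2 : hA.eigenvalues i - M ∈ spectrum ℝ (A - algebraMap ℝ _ M) := by
    rw [← spectrum.sub_singleton_eq]
    exact Set.sub_mem_sub h1 rfl
  rw [algebraMap_eq_smul_one'] at h2
  simpa [Real.norm_eq_abs] using spectrum.norm_le_norm_of_mem h2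

lemma unitary_conj_pow (U : Matrix.unitaryGroup (Fin d) ℂ) (B : Matrix (Fin d) (Fin d) ℂ)
    (k : ℕ) :
    ((U : Matrix (Fin d) (Fin d) ℂ) * B * star (U : Matrix (Fin d) (Fin d) ℂ)) ^ k
      = (U : Matrix (Fin d) (Fin d) ℂ) * B ^ k * star (U : Matrix (Fin d) (Fin d) ℂ) := by
  have hUU : (U : Matrix (Fin d) (Fin d) ℂ) * star (U : Matrix (Fin d) (Fin d) ℂ) = 1 :=
    Matrix.mem_unitaryGroup_iff.mp U.2
  have hUU' : star (U : Matrix (Fin d) (Fin d) ℂ) * (U : Matrix (Fin d) (Fin d) ℂ) = 1 :=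
    Matrix.mem_unitaryGroup_iff'.mp U.2
  induction k with
  | zero => simp [hUU]
  | succ n ih =>
    rw [pow_succ, ih, pow_succ]
    have : (U : Matrix (Fin d) (Fin d) ℂ) * B ^ n * star (U : Matrix (Fin d) (Fin d) ℂ) *
        ((U : Matrix (Fin d) (Fin d) ℂ) * B * star (U : Matrix (Fin d) (Fin d) ℂ))
        = (U : Matrix (Fin d) (Fin d) ℂ) * B ^ n *
          ((star (U : Matrix (Fin d) (Fin d) ℂ) * (U : Matrix (Fin d) (Fin d) ℂ)) *
            (B * star (U : Matrix (Fin d) (Fin d) ℂ))) := by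
      simp only [Matrix.mul_assoc]
    rw [this, hUU', one_mul, ← Matrix.mul_assoc, ← Matrix.mul_assoc]

lemma sub_smul_one_diag {A : Matrix (Fin d) (Fin d) ℂ} (hA : A.IsHermitian) (M : ℝ) :
    A - (M : ℂ) • 1 = (hA.eigenvectorUnitary : Matrix (Fin d) (Fin d) ℂ) *
      Matrix.diagonal (fun i => ((hA.eigenvalues i : ℝ) : ℂ) - (M : ℂ)) *
      star (hA.eigenvectorUnitary : Matrix (Fin d) (Fin d) ℂ) := by
  have hUU : (hA.eigenvectorUnitary : Matrix (Fin d) (Fin d) ℂ) *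
      star (hA.eigenvectorUnitary : Matrix (Fin d) (Fin d) ℂ) = 1 :=
    Matrix.mem_unitaryGroup_iff.mp hA.eigenvectorUnitary.2
  have hdd : (Matrix.diagonal (fun i => ((hA.eigenvalues i : ℝ) : ℂ) - (M : ℂ))
        : Matrix (Fin d) (Fin d) ℂ)
      = Matrix.diagonal (RCLike.ofReal ∘ hA.eigenvalues) - (M : ℂ) • 1 := by
    ext i j
    rcases eq_or_ne i j with h | h
    · subst h
      simp [Matrix.diagonal_apply_eq, Function.comp, Matrix.one_apply, Matrix.smul_apply]
    · simp [Matrix.diagonal_apply_ne _ h, Matrix.one_apply, h, Matrix.smul_apply]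
  rw [hdd, Matrix.mul_sub, Matrix.sub_mul]
  congr 1
  · exact hA.spectral_theorem
  · rw [mul_smul_comm, mul_one, smul_mul_assoc, hUU]

lemma trace_pow_eq {A : Matrix (Fin d) (Fin d) ℂ} (hA : A.IsHermitian) (M : ℝ) (k : ℕ) :
    ((A - (M : ℂ) • 1) ^ k).trace = ∑ i, (((hA.eigenvalues i - M : ℝ)) : ℂ) ^ k := by
  rw [sub_smul_one_diag hA M, unitary_conj_pow, Matrix.trace_mul_comm, ← Matrix.mul_assoc,
    Matrix.mem_unitaryGroup_iff'.mp hA.eigenvectorUnitary.2, Matrix.one_mul,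
    Matrix.diagonal_pow, Matrix.trace_diagonal]
  push_cast
  rfl

lemma posDef_of_eigenvalues_pos {A : Matrix (Fin d) (Fin d) ℂ} (hA : A.IsHermitian)
    (h : ∀ i, 0 < hA.eigenvalues i) : A.PosDef := by
  have hD : (Matrix.diagonal (RCLike.ofReal ∘ hA.eigenvalues) : Matrix (Fin d) (Fin d) ℂ).PosDef := by
    refine Matrix.posDef_diagonal_iff.mpr fun i => ?_
    simp only [Function.comp_apply]
    exact Complex.zero_lt_real.mpr (h i)
  have hUU : (hA.eigenvectorUnitary : Matrix (Fin d) (Fin d) ℂ) *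
      star (hA.eigenvectorUnitary : Matrix (Fin d) (Fin d) ℂ) = 1 :=
    Matrix.mem_unitaryGroup_iff.mp hA.eigenvectorUnitary.2
  refine Matrix.PosDef.of_dotProduct_mulVec_pos hA fun x hx => ?_
  have hx' : star (hA.eigenvectorUnitary : Matrix (Fin d) (Fin d) ℂ) *ᵥ x ≠ 0 := by
    intro hc
    apply hx
    have := congrArg (fun v => (hA.eigenvectorUnitary : Matrix (Fin d) (Fin d) ℂ) *ᵥ v) hc
    simpa [Matrix.mulVec_mulVec, hUU] using this
  have hpos := hD.dotProduct_mulVec_pos hx'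
  have hrw : A = ((star (hA.eigenvectorUnitary : Matrix (Fin d) (Fin d) ℂ))ᴴ) *
      Matrix.diagonal (RCLike.ofReal ∘ hA.eigenvalues) *
      (star (hA.eigenvectorUnitary : Matrix (Fin d) (Fin d) ℂ)) := by
    simpa [Matrix.star_eq_conjTranspose] using hA.spectral_theorem
  rw [hrw]
  simpa only [Matrix.star_mulVec, Matrix.dotProduct_mulVec, Matrix.vecMul_vecMul] using hpos

lemma entropy_eq (hd : 0 < d) {A : Matrix (Fin d) (Fin d) ℂ} (hA : A.IsHermitian)
    {M : ℝ} (hM : 0 < M) (hnorm : ‖A - (M : ℂ) • 1‖ < M) :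
    entropy A =
      (((FormalMultilinearSeries.ofScalars (Matrix (Fin d) (Fin d) ℂ)
        (fun k => ((entCoef M k : ℝ) : ℂ))).sum (A - (M : ℂ) • 1)).trace).re := by
  haveI := matNontrivial hd
  haveI : NormOneClass (Matrix (Fin d) (Fin d) ℂ) := ⟨CStarRing.norm_one⟩
  set B := A - (M : ℂ) • 1 with hB
  have hev : ∀ i, |hA.eigenvalues i - M| < M :=
    fun i => lt_of_le_of_lt (eigenvalues_close hd hA M i) hnorm
  have hnormterm : ∀ k : ℕ, ‖((entCoef M k : ℝ) : ℂ) • B ^ k‖ ≤ |entCoef M k| * ‖B‖ ^ k := by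
    intro k
    rw [norm_smul]
    have h1 : ‖((entCoef M k : ℝ) : ℂ)‖ = |entCoef M k| := by
      simp [Complex.norm_real]
    rw [h1]
    have h2 : ‖B ^ k‖ ≤ ‖B‖ ^ k := by
      cases k with
      | zero => simp
      | succ n => exact norm_pow_le' B n.succ_pos
    exact mul_le_mul_of_nonneg_left h2 (abs_nonneg _)
  have hsummable : Summable (fun k : ℕ => ((entCoef M k : ℝ) : ℂ) • B ^ k) :=
    Summable.of_norm_bounded (summable_entCoef hM (norm_nonneg B) hnorm) hnormterm
  have hsum_eq : (FormalMultilinearSeries.ofScalars (Matrix (Fin d) (Fin d) ℂ)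
        (fun k => ((entCoef M k : ℝ) : ℂ))).sum B
      = ∑' k : ℕ, ((entCoef M k : ℝ) : ℂ) • B ^ k :=
    tsum_congr fun k => FormalMultilinearSeries.ofScalars_apply_eq _ _ _
  set T : Matrix (Fin d) (Fin d) ℂ →L[ℂ] ℂ :=
    LinearMap.toContinuousLinearMap (Matrix.traceLinearMap (Fin d) ℂ ℂ) with hT
  have hTapp : ∀ C : Matrix (Fin d) (Fin d) ℂ, T C = C.trace := fun _ => rfl
  have htr : ((FormalMultilinearSeries.ofScalars (Matrix (Fin d) (Fin d) ℂ)
        (fun k => ((entCoef M k : ℝ) : ℂ))).sum B).trace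
      = ∑' k : ℕ, ((entCoef M k : ℝ) : ℂ) * (B ^ k).trace := by
    rw [hsum_eq, ← hTapp, T.map_tsum hsummable]
    refine tsum_congr fun k => ?_
    rw [_root_.map_smul, hTapp, smul_eq_mul]
  have hterm : ∀ k : ℕ, ((entCoef M k : ℝ) : ℂ) * (B ^ k).trace
      = ∑ i, ((entCoef M k * (hA.eigenvalues i - M) ^ k : ℝ) : ℂ) := by
    intro k
    rw [hB, trace_pow_eq hA M k, Finset.mul_sum]
    refine Finset.sum_congr rfl fun i _ => ?_
    push_cast
    ring
  have hHasSum : HasSum (fun k : ℕ => ∑ i, ((entCoef M k * (hA.eigenvalues i - M) ^ k : ℝ) : ℂ))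
      (∑ i, ((-(hA.eigenvalues i * Real.log (hA.eigenvalues i)) : ℝ) : ℂ)) := by
    refine hasSum_sum fun i _ => ?_
    have h := hasSum_entCoef hM (hev i)
    have h2 : M + (hA.eigenvalues i - M) = hA.eigenvalues i := by ring
    rw [h2] at h
    exact Complex.hasSum_ofReal.mpr h
  rw [htr]
  rw [tsum_congr hterm, hHasSum.tsum_eq, ← Complex.ofReal_sum, Complex.ofReal_re]
  rw [entropy, dif_pos hA]
  rw [← Finset.sum_neg_distrib]

lemma isHermitian_sub_smul_one {A : Matrix (Fin d) (Fin d) ℂ} (hA : A.IsHermitian) (M : ℝ) :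
    (A - (M : ℂ) • 1).IsHermitian := by
  show (A - (M : ℂ) • 1)ᴴ = _
  simp [Matrix.conjTranspose_sub, Matrix.conjTranspose_smul, hA.eq, Complex.star_def,
    Complex.conj_ofReal]

end EntropyAux

/-- For `X` positive definite with `Tr X² = 1` and `Y` with `Tr(Y Yᴴ) = 1`, `Tr(X Yᴴ) = 0`,
setting `ρ(t) = X(t) X(t)ᴴ` with `X(t) = √(1−t²) X + t Y`, there are `R > 0` and
`τ ∈ (0,1)` such that on `(−τ, τ)` the matrix `ρ(t)` is positive definite, `t ↦ S(ρ(t))`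
is three times differentiable, and its third derivative has absolute value `< R`. -/
theorem entropy_third_deriv_bound {d : ℕ} (X Y : Matrix (Fin d) (Fin d) ℂ)
    (hX : X.PosDef) (hX1 : (X * X).trace = 1)
    (hY1 : (Y * Yᴴ).trace = 1) (hXY : (X * Yᴴ).trace = 0)
    (g : ℝ → ℝ) (hg : g = fun t => entropy (curveM X Y t * (curveM X Y t)ᴴ)) :
    ∃ R : ℝ, 0 < R ∧ ∃ τ : ℝ, 0 < τ ∧ τ < 1 ∧ ∀ t ∈ Set.Ioo (-τ) τ,
      (curveM X Y t * (curveM X Y t)ᴴ).PosDef ∧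
      DifferentiableAt ℝ g t ∧ DifferentiableAt ℝ (deriv g) t ∧
      DifferentiableAt ℝ (deriv (deriv g)) t ∧
      |deriv (deriv (deriv g)) t| < R := by
  classical
  rcases Nat.eq_zero_or_pos d with hd0 | hd
  · exfalso
    have h0 : (X * X).trace = 0 := by
      subst hd0
      simp [Matrix.trace]
    rw [h0] at hX1
    exact zero_ne_one hX1
  haveI := EntropyAux.matNontrivial hd
  haveI : NormOneClass (Matrix (Fin d) (Fin d) ℂ) := ⟨CStarRing.norm_one⟩
  haveI : Nonempty (Fin d) := ⟨⟨0, hd⟩⟩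
  set ρ : ℝ → Matrix (Fin d) (Fin d) ℂ := fun t => curveM X Y t * (curveM X Y t)ᴴ with hρdef
  have hherm : ∀ t, (ρ t).IsHermitian := fun t => Matrix.isHermitian_mul_conjTranspose_self _
  have hXh : Xᴴ = X := hX.1
  have hcurve0 : curveM X Y 0 = X := by
    simp [curveM, Real.sqrt_one]
  have hρ0 : ρ 0 = X * X := by
    show curveM X Y 0 * (curveM X Y 0)ᴴ = X * X
    rw [hcurve0, hXh]
  have hA0 : (X * X).IsHermitian := hρ0 ▸ hherm 0
  have hXXpos : (X * X).PosDef := by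
    refine Matrix.PosDef.of_dotProduct_mulVec_pos hA0 fun x hx => ?_
    have hXunit : IsUnit X := hX.isUnit
    have hx' : X *ᵥ x ≠ 0 := by
      intro hc
      exact hx ((Matrix.mulVec_injective_iff_isUnit.mpr hXunit) (by simpa using hc))
    have h1 : dotProduct (star x) ((X * X) *ᵥ x)
        = dotProduct (star (X *ᵥ x)) (X *ᵥ x) := by
      rw [Matrix.star_mulVec, ← Matrix.mulVec_mulVec, Matrix.dotProduct_mulVec, hXh]
    rw [h1]
    exact Matrix.dotProduct_star_self_pos_iff.mpr hx'
  have hevpos : ∀ i, 0 < hA0.eigenvalues i := hXXpos.eigenvalues_pos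
  -- choose ε and M
  set ε : ℝ := Finset.univ.inf' Finset.univ_nonempty hA0.eigenvalues with hεdef
  have hε_pos : 0 < ε := by
    rw [hεdef, Finset.lt_inf'_iff]
    exact fun i _ => hevpos i
  have hεle : ∀ i, ε ≤ hA0.eigenvalues i := fun i => Finset.inf'_le _ (Finset.mem_univ i)
  set M : ℝ := ‖X * X‖ + 1 with hMdef
  have hub : ∀ i, hA0.eigenvalues i ≤ ‖X * X‖ := by
    intro i
    have h := spectrum.norm_le_norm_of_mem (hA0.eigenvalues_mem_spectrum_real i)
    exact le_trans (le_abs_self _) (by simpa [Real.norm_eq_abs] using h)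
  have hεM : ε ≤ ‖X * X‖ := le_trans (hεle ⟨0, hd⟩) (hub ⟨0, hd⟩)
  have hM_pos : 0 < M := by
    have : (0:ℝ) ≤ ‖X * X‖ := norm_nonneg _
    rw [hMdef]; linarith
  have hnorm0 : ‖X * X - (M : ℂ) • 1‖ ≤ M - ε := by
    refine EntropyAux.norm_le_of_spectrum_le hd (EntropyAux.isHermitian_sub_smul_one hA0 M)
      (by rw [hMdef]; linarith) ?_
    intro x hx
    rw [← EntropyAux.algebraMap_eq_smul_one', ← spectrum.sub_singleton_eq] at hx
    obtain ⟨a, ha, b, hb, rfl⟩ := Set.mem_sub.mp hx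
    rw [hA0.spectrum_real_eq_range_eigenvalues] at ha
    obtain ⟨i, rfl⟩ := ha
    have hbM : b = M := hb
    subst hbM
    have h1 := hεle i
    have h2 := hub i
    rw [abs_le]
    exact ⟨by linarith, by linarith⟩
  -- smoothness of the curve
  have hρsmooth : ∀ t ∈ Set.Ioo (-(2⁻¹) : ℝ) 2⁻¹, ContDiffAt ℝ 3 ρ t := by
    intro t ht
    have hne : 1 - t ^ 2 ≠ 0 := by
      obtain ⟨h1, h2⟩ := ht
      nlinarith
    have hpoly : ContDiffAt ℝ 3 (fun s : ℝ => 1 - s ^ 2) t :=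
      (contDiff_const.sub (contDiff_id.pow 2)).contDiffAt
    have hsq : ContDiffAt ℝ 3 (fun s : ℝ => Real.sqrt (1 - s ^ 2)) t :=
      (Real.contDiffAt_sqrt hne).comp t hpoly
    have hsqc : ContDiffAt ℝ 3 (fun s : ℝ => ((Real.sqrt (1 - s ^ 2) : ℝ) : ℂ)) t :=
      Complex.ofRealCLM.contDiff.contDiffAt.comp t hsq
    have htc : ContDiffAt ℝ 3 (fun s : ℝ => ((s : ℝ) : ℂ)) t :=
      Complex.ofRealCLM.contDiff.contDiffAt
    have hc1 : ContDiffAt ℝ 3 (fun s => curveM X Y s) t := by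
      have hsmulX : ContDiffAt ℝ 3 (fun s : ℝ => ((Real.sqrt (1 - s ^ 2) : ℝ) : ℂ) • X) t := by
        have := (((ContinuousLinearMap.toSpanSingleton ℂ X).restrictScalars
          ℝ).contDiff.contDiffAt).comp t hsqc
        exact this.congr_of_eventuallyEq (Filter.Eventually.of_forall fun s => by
          simp [ContinuousLinearMap.toSpanSingleton_apply])
      have hsmulY : ContDiffAt ℝ 3 (fun s : ℝ => ((s : ℝ) : ℂ) • Y) t := by
        have := (((ContinuousLinearMap.toSpanSingleton ℂ Y).restrictScalars
          ℝ).contDiff.contDiffAt).comp t htc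
        exact this.congr_of_eventuallyEq (Filter.Eventually.of_forall fun s => by
          simp [ContinuousLinearMap.toSpanSingleton_apply])
      simp only [curveM]
      exact hsmulX.add hsmulY
    have hc2 : ContDiffAt ℝ 3 (fun s => (curveM X Y s)ᴴ) t := by
      have hconj : (fun s : ℝ => (curveM X Y s)ᴴ)
          = fun s : ℝ => ((Real.sqrt (1 - s ^ 2) : ℝ) : ℂ) • Xᴴ + ((s : ℝ) : ℂ) • Yᴴ := by
        funext s
        simp [curveM, Matrix.conjTranspose_smul, Complex.star_def, Complex.conj_ofReal]
      rw [hconj]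
      have hsmulX : ContDiffAt ℝ 3 (fun s : ℝ => ((Real.sqrt (1 - s ^ 2) : ℝ) : ℂ) • Xᴴ) t := by
        have := (((ContinuousLinearMap.toSpanSingleton ℂ Xᴴ).restrictScalars
          ℝ).contDiff.contDiffAt).comp t hsqc
        exact this.congr_of_eventuallyEq (Filter.Eventually.of_forall fun s => by
          simp [ContinuousLinearMap.toSpanSingleton_apply])
      have hsmulY : ContDiffAt ℝ 3 (fun s : ℝ => ((s : ℝ) : ℂ) • Yᴴ) t := by
        have := (((ContinuousLinearMap.toSpanSingleton ℂ Yᴴ).restrictScalars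
          ℝ).contDiff.contDiffAt).comp t htc
        exact this.congr_of_eventuallyEq (Filter.Eventually.of_forall fun s => by
          simp [ContinuousLinearMap.toSpanSingleton_apply])
      exact hsmulX.add hsmulY
    exact hc1.mul hc2
  -- power series setup
  set p := FormalMultilinearSeries.ofScalars (Matrix (Fin d) (Fin d) ℂ)
      (fun k => ((EntropyAux.entCoef M k : ℝ) : ℂ)) with hpdef
  set G : ℝ → ℝ := fun t => ((p.sum (ρ t - (M : ℂ) • 1)).trace).re with hGdef
  set r : ℝ := M - ε / 2 with hrdef
  have hr_pos : 0 < r := by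
    have : (0:ℝ) ≤ ‖X * X‖ := norm_nonneg _
    rw [hrdef]; rw [hMdef]; linarith
  have hrM : r < M := by rw [hrdef]; linarith
  have hrad : ENNReal.ofReal r ≤ p.radius := by
    rw [ENNReal.ofReal]
    apply p.le_radius_of_summable_norm
    have hcoe : ((r.toNNReal : ℝ≥0) : ℝ) = r := Real.coe_toNNReal _ hr_pos.le
    have hsummable := EntropyAux.summable_entCoef (M := M) hM_pos hr_pos.le hrM
    refine hsummable.congr fun n => ?_
    rw [hpdef, FormalMultilinearSeries.ofScalars_norm, hcoe]
    simp [Complex.norm_real]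
  have hrad_pos : 0 < p.radius :=
    lt_of_lt_of_le (by simpa using hr_pos) hrad
  have hball := p.hasFPowerSeriesOnBall hrad_pos
  -- continuity and choice of τ₀
  have hcont : ContinuousAt (fun t => ‖ρ t - (M : ℂ) • 1‖) 0 := by
    have h := (hρsmooth 0 (by norm_num)).continuousAt
    exact (h.sub continuousAt_const).norm
  have hval0 : ‖ρ 0 - (M : ℂ) • 1‖ < r := by
    rw [hρ0]
    calc ‖X * X - (M : ℂ) • 1‖ ≤ M - ε := hnorm0
      _ < r := by rw [hrdef]; linarith
  obtain ⟨δ, hδpos, hδball⟩ := Metric.mem_nhds_iff.mp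
    (hcont.preimage_mem_nhds (isOpen_Iio.mem_nhds hval0))
  set τ₀ : ℝ := min (δ / 2) 4⁻¹ with hτ₀def
  have hτ₀pos : 0 < τ₀ := lt_min (by linarith) (by norm_num)
  set I : Set ℝ := Set.Ioo (-τ₀) τ₀ with hIdef
  have hI_open : IsOpen I := isOpen_Ioo
  have hsubhalf : I ⊆ Set.Ioo (-(2⁻¹) : ℝ) 2⁻¹ := by
    intro t ht
    obtain ⟨h1, h2⟩ := ht
    have hτ₀le : τ₀ ≤ 4⁻¹ := min_le_right _ _
    exact ⟨by linarith, by linarith⟩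
  have hnormt : ∀ t ∈ I, ‖ρ t - (M : ℂ) • 1‖ < r := by
    intro t ht
    obtain ⟨h1, h2⟩ := ht
    have hτ₀le : τ₀ ≤ δ / 2 := min_le_left _ _
    have : t ∈ Metric.ball (0:ℝ) δ := by
      rw [Metric.mem_ball, Real.dist_eq, sub_zero, abs_lt]
      constructor <;> linarith
    exact hδball this
  -- smoothness of G on I
  have hGc : ∀ t ∈ I, ContDiffAt ℝ 3 G t := by
    intro t ht
    have h1 : ContDiffAt ℝ 3 (fun s => ρ s - (M : ℂ) • 1) t :=
      (hρsmooth t (hsubhalf ht)).sub contDiffAt_const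
    have h2 : AnalyticAt ℂ p.sum (ρ t - (M : ℂ) • 1) := by
      refine hball.analyticAt_of_mem ?_
      rw [EMetric.mem_ball, edist_zero_right]
      calc (‖ρ t - (M : ℂ) • 1‖₊ : ℝ≥0∞) = ENNReal.ofReal ‖ρ t - (M : ℂ) • 1‖ :=
            (ofReal_norm _).symm
        _ < ENNReal.ofReal r := by
            rw [ENNReal.ofReal_lt_ofReal_iff hr_pos]
            exact hnormt t ht
        _ ≤ p.radius := hrad
    have h3 : ContDiffAt ℝ 3 (fun s => p.sum (ρ s - (M : ℂ) • 1)) t :=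
      ContDiffAt.comp (g := p.sum) t ((h2.contDiffAt (n := 3)).restrict_scalars ℝ) h1
    have h4 := ((Complex.reCLM.comp
        ((LinearMap.toContinuousLinearMap (Matrix.traceLinearMap (Fin d) ℂ ℂ)).restrictScalars
          ℝ)).contDiff.contDiffAt).comp t h3
    exact h4.congr_of_eventuallyEq (Filter.Eventually.of_forall fun s => rfl)
  have hEqOn : ∀ t ∈ I, g t = G t := by
    intro t ht
    rw [hg]
    exact EntropyAux.entropy_eq hd (hherm t) hM_pos (lt_trans (hnormt t ht) hrM)
  -- smoothness classes of derivatives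
  have hGOn : ContDiffOn ℝ 3 G I := fun t ht => (hGc t ht).contDiffWithinAt
  have hG1 : ContDiffOn ℝ 2 (deriv G) I := hGOn.deriv_of_isOpen hI_open (by norm_num)
  have hG2 : ContDiffOn ℝ 1 (deriv (deriv G)) I := hG1.deriv_of_isOpen hI_open (by norm_num)
  have hG3 : ContDiffOn ℝ 0 (deriv (deriv (deriv G))) I := hG2.deriv_of_isOpen hI_open (by norm_num)
  -- eventual equalities
  have hgG : ∀ t ∈ I, g =ᶠ[nhds t] G := fun t ht =>
    Filter.eventuallyEq_of_mem (hI_open.mem_nhds ht) (fun s hs => hEqOn s hs)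
  have hd1 : ∀ t ∈ I, deriv g t = deriv G t := fun t ht => (hgG t ht).deriv_eq
  have hgG1 : ∀ t ∈ I, deriv g =ᶠ[nhds t] deriv G := fun t ht =>
    Filter.eventuallyEq_of_mem (hI_open.mem_nhds ht) (fun s hs => hd1 s hs)
  have hd2 : ∀ t ∈ I, deriv (deriv g) t = deriv (deriv G) t := fun t ht => (hgG1 t ht).deriv_eq
  have hgG2 : ∀ t ∈ I, deriv (deriv g) =ᶠ[nhds t] deriv (deriv G) := fun t ht =>
    Filter.eventuallyEq_of_mem (hI_open.mem_nhds ht) (fun s hs => hd2 s hs)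
  have hd3 : ∀ t ∈ I, deriv (deriv (deriv g)) t = deriv (deriv (deriv G)) t := fun t ht =>
    (hgG2 t ht).deriv_eq
  -- compact bound for the third derivative
  set τ : ℝ := τ₀ / 2 with hτdef
  have hτpos : 0 < τ := by rw [hτdef]; linarith
  have hτlt1 : τ < 1 := by
    have hτ₀le : τ₀ ≤ 4⁻¹ := min_le_right _ _
    rw [hτdef]; linarith
  have hτltτ₀ : τ < τ₀ := by rw [hτdef]; linarith
  have hKsub : Set.Icc (-τ) τ ⊆ I := by
    intro x hx
    obtain ⟨h1, h2⟩ := hx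
    exact ⟨by linarith, by linarith⟩
  obtain ⟨C, hC⟩ := (isCompact_Icc (a := -τ) (b := τ)).exists_bound_of_continuousOn
    ((hG3.continuousOn).mono hKsub)
  have hC0 : 0 ≤ C := le_trans (norm_nonneg _) (hC 0 ⟨by linarith, by linarith⟩)
  refine ⟨C + 1, by linarith, τ, hτpos, hτlt1, fun t ht => ?_⟩
  obtain ⟨ht1, ht2⟩ := ht
  have htI : t ∈ I := ⟨by linarith, by linarith⟩
  have htK : t ∈ Set.Icc (-τ) τ := ⟨ht1.le, ht2.le⟩
  refine ⟨?_, ?_, ?_, ?_, ?_⟩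
  · -- positive definiteness
    refine EntropyAux.posDef_of_eigenvalues_pos (hherm t) fun i => ?_
    have hclose := EntropyAux.eigenvalues_close hd (hherm t) M i
    have := lt_of_le_of_lt hclose (hnormt t htI)
    have habs := abs_lt.mp this
    have : M - r ≤ (hherm t).eigenvalues i := by linarith [habs.1]
    have hMr : 0 < M - r := by linarith
    linarith
  · exact ((hgG t htI).differentiableAt_iff).mpr
      ((hGc t htI).differentiableAt (by norm_num))
  · exact ((hgG1 t htI).differentiableAt_iff).mpr
      (((hG1.contDiffAt (hI_open.mem_nhds htI)).differentiableAt) (by norm_num))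
  · exact ((hgG2 t htI).differentiableAt_iff).mpr
      (((hG2.contDiffAt (hI_open.mem_nhds htI)).differentiableAt) (by norm_num))
  · rw [hd3 t htI]
    calc |deriv (deriv (deriv G)) t| ≤ C := by
          simpa [Real.norm_eq_abs] using hC t htK
      _ < C + 1 := by linarith
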